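/- arXiv:2410.16401 — 4 statements merged into one kernel-verified Lean document; each statement's English description precedes it below -/
import Mathlib

section
/- Let φ be infinitely differentiable with φ'(z) ≥ ρ1 and φ'''(z) ≥ ρ2 for all z ∈ ℝ, where ρ1, ρ2 > 0, and suppose x_1, …, x_n are linearly independent. Let θ* satisfy f_i(θ*) = y_i for all i ∈ {1,…,n}, and suppose the Euclidean gradient DG(θ*) lies in the linear span of {Df_1(θ*), …, Df_n(θ*)} (i.e., θ* is a first-order stationary point of the trace of the Hessian of L on the zero-loss set). Then for every i ∈ {1,…,n} and every j ∈ {1,…,m}, φ(θ*_j · x_i) = y_i / m; in particular all the inner products θ*_j · x_i, j = 1,…,m, are equal to the common value φ^{-1}(y_i/m). -/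
open scoped RealInnerProductSpace
open Real Filter

noncomputable section

/-- The parameter space ℝ^{md}: m blocks θ_j ∈ ℝ^d, with the Euclidean norm. -/
abbrev Param (m d : ℕ) : Type := PiLp 2 (fun _ : Fin m => EuclideanSpace ℝ (Fin d))

/-- Network output f_i(θ) = Σ_j φ(θ_j · x_i). -/
def netF {n m d : ℕ} (φ : ℝ → ℝ) (x : Fin n → EuclideanSpace ℝ (Fin d)) (i : Fin n)
    (θ : Param m d) : ℝ := ∑ j, φ ⟪θ j, x i⟫

/-- Euclidean gradient Df_i(θ), with j-th block φ'(θ_j · x_i) x_i. -/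
def gradF {n m d : ℕ} (φ : ℝ → ℝ) (x : Fin n → EuclideanSpace ℝ (Fin d)) (i : Fin n)
    (θ : Param m d) : Param m d := WithLp.toLp 2 (fun j => (deriv φ ⟪θ j, x i⟫) • x i)

/-- Implicit regularizer G(θ) = Σ_i Σ_j φ'(θ_j · x_i)². -/
def regG {n m d : ℕ} (φ : ℝ → ℝ) (x : Fin n → EuclideanSpace ℝ (Fin d))
    (θ : Param m d) : ℝ := ∑ i, ∑ j, (deriv φ ⟪θ j, x i⟫) ^ 2

/-- Euclidean gradient DG(θ), with j-th block Σ_i 2 φ'(θ_j·x_i) φ''(θ_j·x_i) x_i. -/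
def gradRegG {n m d : ℕ} (φ : ℝ → ℝ) (x : Fin n → EuclideanSpace ℝ (Fin d))
    (θ : Param m d) : Param m d :=
  WithLp.toLp 2 (fun j => ∑ i, (2 * deriv φ ⟪θ j, x i⟫ * deriv (deriv φ) ⟪θ j, x i⟫) • x i)

/-- Squared loss L(θ) = Σ_i (f_i(θ) − y_i)². -/
def lossL {n m d : ℕ} (φ : ℝ → ℝ) (x : Fin n → EuclideanSpace ℝ (Fin d)) (y : Fin n → ℝ)
    (θ : Param m d) : ℝ := ∑ i, (netF φ x i θ - y i) ^ 2

/-- Jacobian Df(θ) : ℝ^{md} → ℝ^n, whose i-th row is Df_i(θ). -/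
def jacobian {n m d : ℕ} (φ : ℝ → ℝ) (x : Fin n → EuclideanSpace ℝ (Fin d))
    (θ : Param m d) : Param m d →ₗ[ℝ] (Fin n → ℝ) :=
  LinearMap.pi fun i => (innerSL ℝ (gradF φ x i θ)).toLinearMap

/-- Riemannian gradient ∇G(θ): orthogonal projection of DG(θ) onto ker Df(θ). -/
def rgradG {n m d : ℕ} (φ : ℝ → ℝ) (x : Fin n → EuclideanSpace ℝ (Fin d))
    (θ : Param m d) : Param m d :=
  (Submodule.orthogonalProjection (LinearMap.ker (jacobian φ x θ)) (gradRegG φ x θ) : Param m d)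


lemma param_sum_apply {n m d : ℕ} (s : Finset (Fin n)) (v : Fin n → Param m d) (j : Fin m) :
    (∑ i ∈ s, v i) j = ∑ i ∈ s, v i j := by
  classical
  induction s using Finset.induction with
  | empty => rfl
  | insert a s h ih => rw [Finset.sum_insert h, Finset.sum_insert h, ← ih]; rfl

lemma param_smul_apply {m d : ℕ} (c : ℝ) (v : Param m d) (j : Fin m) :
    (c • v) j = c • v j := rfl

/-- at a first-order stationary point of Tr D²L on the zero-loss set,
all pre-activations equal φ⁻¹(y_i/m). -/
theorem stmt_0
    (n m d : ℕ) (hn : 1 ≤ n) (hm : 1 ≤ m) (hd : 1 ≤ d)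
    (x : Fin n → EuclideanSpace ℝ (Fin d)) (hx : ∀ i, ‖x i‖ = 1)
    (hlin : LinearIndependent ℝ x)
    (y : Fin n → ℝ)
    (φ : ℝ → ℝ) (hφ : ContDiff ℝ (⊤ : ℕ∞) φ)
    (ρ1 ρ2 : ℝ) (hρ1 : 0 < ρ1) (hρ2 : 0 < ρ2)
    (hφ' : ∀ z, ρ1 ≤ deriv φ z)
    (hφ''' : ∀ z, ρ2 ≤ deriv (deriv (deriv φ)) z)
    (θs : Param m d)
    (hfit : ∀ i, netF φ x i θs = y i)
    (hstat : gradRegG φ x θs ∈ Submodule.span ℝ (Set.range fun i => gradF φ x i θs)) :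
    ∀ i j, φ ⟪θs j, x i⟫ = y i / (m : ℝ) ∧ ∀ j', ⟪θs j, x i⟫ = ⟪θs j', x i⟫ := by
  obtain ⟨c, hc⟩ := (Submodule.mem_span_range_iff_exists_fun ℝ).mp hstat
  have hmono : StrictMono (deriv (deriv φ)) :=
    strictMono_of_deriv_pos (fun z => lt_of_lt_of_le hρ2 (hφ''' z))
  have key : ∀ i j, deriv (deriv φ) ⟪θs j, x i⟫ = c i / 2 := by
    intro i j
    have hj : (∑ i, c i • gradF φ x i θs) j = gradRegG φ x θs j := congrFun (congrArg WithLp.ofLp hc) j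
    rw [param_sum_apply] at hj
    simp only [param_smul_apply, gradF, gradRegG, WithLp.ofLp_toLp, smul_smul] at hj
    have h0 : ∑ i, (c i * deriv φ ⟪θs j, x i⟫
        - 2 * deriv φ ⟪θs j, x i⟫ * deriv (deriv φ) ⟪θs j, x i⟫) • x i = 0 := by
      simp only [sub_smul, Finset.sum_sub_distrib]
      rw [sub_eq_zero]
      exact hj
    have hz := Fintype.linearIndependent_iff.mp hlin _ h0 i
    have hφ'pos : 0 < deriv φ ⟪θs j, x i⟫ := lt_of_lt_of_le hρ1 (hφ' _)
    have h3 : (deriv (deriv φ) ⟪θs j, x i⟫ * 2 - c i) * deriv φ ⟪θs j, x i⟫ = 0 := by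
      linear_combination -hz
    rcases mul_eq_zero.mp h3 with h4 | h4
    · linarith
    · exact absurd h4 (ne_of_gt hφ'pos)
  intro i j
  have heq : ∀ j', ⟪θs j, x i⟫ = ⟪θs j', x i⟫ := fun j' =>
    hmono.injective (by rw [key i j, key i j'])
  refine ⟨?_, heq⟩
  have hsum : ∑ j', φ ⟪θs j', x i⟫ = y i := hfit i
  have h2 : ∑ j', φ ⟪θs j', x i⟫ = (m : ℝ) * φ ⟪θs j, x i⟫ := by
    rw [Finset.sum_congr rfl (fun j' _ => by rw [← heq j'])]
    simp [Finset.sum_const, mul_comm]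
  have hm0 : (m : ℝ) ≠ 0 := by positivity
  rw [eq_div_iff hm0]
  linarith [hsum, h2]
end
end

section
/- Let φ be infinitely differentiable with φ'(z) ≥ ρ1 and φ'''(z) ≥ ρ2 for all z ∈ ℝ, where ρ1, ρ2 > 0, satisfying β-normality with constant β > 0, and assume the coherence assumption with constant μ > 0. Let θ ∈ ℝ^{md} and α' ∈ ℝ^n satisfy ‖DG(θ) − 2 Σ_{i=1}^n α'_i Df_i(θ)‖ ≤ √μ · β. Then for every u = (u_1, …, u_m) ∈ ℝ^{md}: Σ_{j=1}^m Σ_{i=1}^n (2 φ'(θ_j · x_i) φ'''(θ_j · x_i) + 2 φ''(θ_j · x_i)(φ''(θ_j · x_i) − α'_i)) (x_i · u_j)² ≥ Σ_{j=1}^m Σ_{i=1}^n φ'(θ_j · x_i) φ'''(θ_j · x_i) (x_i · u_j)² ≥ 0. (The left-hand quadratic form is the Riemannian Hessian of the trace of the Hessian of L on the zero-loss manifold, evaluated at the tangent vector u; hence this Hessian is positive semidefinite at approximate stationary points.) -/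
open scoped RealInnerProductSpace
open Real Filter

noncomputable section

/-- at √μ·β-approximate stationary points the quadratic form of the
Riemannian Hessian of Tr D²L dominates Σ φ'φ'''(x_i·u_j)² ≥ 0, hence is PSD. -/
theorem stmt_6
    (n m d : ℕ) (hn : 1 ≤ n) (hm : 1 ≤ m) (hd : 1 ≤ d)
    (x : Fin n → EuclideanSpace ℝ (Fin d)) (hx : ∀ i, ‖x i‖ = 1)
    (μ : ℝ) (hμ : 0 < μ)
    (hcoh : ∀ c : Fin n → ℝ, μ * ∑ i, (c i) ^ 2 ≤ ‖∑ i, c i • x i‖ ^ 2)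
    (φ : ℝ → ℝ) (hφ : ContDiff ℝ (⊤ : ℕ∞) φ)
    (ρ1 ρ2 : ℝ) (hρ1 : 0 < ρ1) (hρ2 : 0 < ρ2)
    (hφ' : ∀ z, ρ1 ≤ deriv φ z)
    (hφ''' : ∀ z, ρ2 ≤ deriv (deriv (deriv φ)) z)
    (β : ℝ) (hβ : 0 < β)
    (hnormal : ∀ z, β * |deriv (deriv φ) z| ≤ (deriv φ z) ^ 2 * deriv (deriv (deriv φ)) z)
    (θ : Param m d) (α : Fin n → ℝ)
    (happrox : ‖gradRegG φ x θ - (2 : ℝ) • ∑ i, α i • gradF φ x i θ‖ ≤ Real.sqrt μ * β) :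
    ∀ u : Param m d,
      (∑ j, ∑ i, (deriv φ ⟪θ j, x i⟫ * deriv (deriv (deriv φ)) ⟪θ j, x i⟫)
          * ⟪x i, u j⟫ ^ 2
        ≤ ∑ j, ∑ i,
            (2 * deriv φ ⟪θ j, x i⟫ * deriv (deriv (deriv φ)) ⟪θ j, x i⟫
              + 2 * deriv (deriv φ) ⟪θ j, x i⟫ * (deriv (deriv φ) ⟪θ j, x i⟫ - α i))
            * ⟪x i, u j⟫ ^ 2) ∧
      (0 ≤ ∑ j, ∑ i, (deriv φ ⟪θ j, x i⟫ * deriv (deriv (deriv φ)) ⟪θ j, x i⟫)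
          * ⟪x i, u j⟫ ^ 2) := by
  intro u
  have hβ' : 0 ≤ Real.sqrt μ * β := mul_nonneg (Real.sqrt_nonneg μ) hβ.le
  -- pointwise key inequality
  have key : ∀ (j : Fin m) (i : Fin n),
      0 ≤ deriv φ ⟪θ j, x i⟫ * deriv (deriv (deriv φ)) ⟪θ j, x i⟫
        + 2 * deriv (deriv φ) ⟪θ j, x i⟫ * (deriv (deriv φ) ⟪θ j, x i⟫ - α i) := by
    intro j i
    set v : Param m d := gradRegG φ x θ - (2 : ℝ) • ∑ i, α i • gradF φ x i θ with hv
    have hvj : v j = ∑ i, (2 * deriv φ ⟪θ j, x i⟫ *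
        (deriv (deriv φ) ⟪θ j, x i⟫ - α i)) • x i := by
      have hsumap : ∀ (w : Fin n → Param m d), (∑ i, w i) j = ∑ i, w i j :=
        fun w => by rw [WithLp.ofLp_sum, Finset.sum_apply]
      have h0 : v j = (∑ i, (2 * deriv φ ⟪θ j, x i⟫ * deriv (deriv φ) ⟪θ j, x i⟫) • x i)
          - ∑ i, (2 * (α i * deriv φ ⟪θ j, x i⟫)) • x i := by
        simp [hv, gradRegG, gradF, hsumap, Pi.smul_apply, smul_smul,
          Finset.smul_sum, mul_comm, mul_assoc, mul_left_comm]
      rw [h0, ← Finset.sum_sub_distrib]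
      refine Finset.sum_congr rfl fun i _ => ?_
      rw [← sub_smul]
      ring_nf
    -- norm of the block is at most the total norm
    have hblock : ‖v j‖ ^ 2 ≤ μ * β ^ 2 := by
      have h1 : ‖v j‖ ^ 2 ≤ ‖v‖ ^ 2 := by
        conv_rhs => rw [PiLp.norm_sq_eq_of_L2]
        exact Finset.single_le_sum (fun k _ => sq_nonneg (‖v k‖)) (Finset.mem_univ j)
      have h2 : ‖v‖ ^ 2 ≤ (Real.sqrt μ * β) ^ 2 :=
        pow_le_pow_left₀ (norm_nonneg _) happrox 2
      have h3 : (Real.sqrt μ * β) ^ 2 = μ * β ^ 2 := by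
        rw [mul_pow, Real.sq_sqrt hμ.le]
      linarith
    -- coherence
    set c : Fin n → ℝ := fun i => 2 * deriv φ ⟪θ j, x i⟫ * (deriv (deriv φ) ⟪θ j, x i⟫ - α i)
      with hc
    have hsum : μ * ∑ i, (c i) ^ 2 ≤ μ * β ^ 2 := by
      calc μ * ∑ i, (c i) ^ 2 ≤ ‖∑ i, c i • x i‖ ^ 2 := hcoh c
        _ = ‖v j‖ ^ 2 := by rw [hvj]
        _ ≤ μ * β ^ 2 := hblock
    have hsum2 : ∑ i, (c i) ^ 2 ≤ β ^ 2 := le_of_mul_le_mul_left hsum hμ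
    have hci : (c i) ^ 2 ≤ β ^ 2 :=
      le_trans (Finset.single_le_sum (fun k _ => sq_nonneg (c k)) (Finset.mem_univ i)) hsum2
    have habs : |c i| ≤ β := by
      have h7 : |c i| ^ 2 ≤ β ^ 2 := by simpa [sq_abs] using hci
      nlinarith [abs_nonneg (c i)]
    -- normality bound
    set A := deriv φ ⟪θ j, x i⟫ with hA
    set B := deriv (deriv φ) ⟪θ j, x i⟫ with hB
    set C := deriv (deriv (deriv φ)) ⟪θ j, x i⟫ with hC
    have hApos : 0 < A := lt_of_lt_of_le hρ1 (hφ' _)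
    have hN : β * |B| ≤ A ^ 2 * C := hnormal _
    have h4 : |B * c i| ≤ A ^ 2 * C := by
      calc |B * c i| = |B| * |c i| := abs_mul _ _
        _ ≤ |B| * β := mul_le_mul_of_nonneg_left habs (abs_nonneg _)
        _ = β * |B| := mul_comm _ _
        _ ≤ A ^ 2 * C := hN
    have h5 : -(A ^ 2 * C) ≤ B * c i := by
      have h8 := neg_abs_le (B * c i)
      linarith [h4]
    have h6 : B * c i = 2 * A * B * (B - α i) := by rw [hc]; ring
    nlinarith [h5, hApos]
  refine ⟨?_, ?_⟩
  · refine Finset.sum_le_sum fun j _ => Finset.sum_le_sum fun i _ => ?_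
    have hk := key j i
    nlinarith [sq_nonneg (⟪x i, u j⟫ : ℝ), hk]
  · refine Finset.sum_nonneg fun j _ => Finset.sum_nonneg fun i _ => ?_
    have h1 : (0:ℝ) < deriv φ ⟪θ j, x i⟫ := lt_of_lt_of_le hρ1 (hφ' _)
    have h2 : (0:ℝ) < deriv (deriv (deriv φ)) ⟪θ j, x i⟫ :=
      lt_of_lt_of_le hρ2 (hφ''' _)
    positivity
end
end

section
/- Let φ be infinitely differentiable with φ'(z) ≥ ρ1 and φ'''(z) ≥ ρ2 for all z ∈ ℝ, where ρ1, ρ2 > 0, satisfying β-normality with constant β > 0, and assume the coherence assumption with constant μ > 0. Let θ ∈ ℝ^{md} and α' ∈ ℝ^n satisfy ‖DG(θ) − 2 Σ_{i=1}^n α'_i Df_i(θ)‖ ≤ √μ · β. Then for every v = (v_1, …, v_m) ∈ ℝ^{md} such that each v_j lies in the linear span of {x_1, …, x_n}: Σ_{j=1}^m Σ_{i=1}^n (2 φ'(θ_j · x_i) φ'''(θ_j · x_i) + 2 φ''(θ_j · x_i)(φ''(θ_j · x_i) − α'_i)) (x_i · v_j)² ≥ ρ1 ρ2 μ ‖v‖².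 -/
open scoped RealInnerProductSpace
open Real Filter

noncomputable section

/-- Auxiliary algebraic bound for the per-term Hessian coefficient. -/
lemma stmt7_key_bound (r1 r2 b0 a b t e : ℝ) (hr1 : 0 < r1) (hr2 : 0 < r2)
    (ha : r1 ≤ a) (ht : r2 ≤ t) (hc : |2 * a * e| ≤ b0) (hn : b0 * |b| ≤ a ^ 2 * t) :
    r1 * r2 ≤ 2 * a * t + 2 * b * e := by
  have ha0 : 0 < a := lt_of_lt_of_le hr1 ha
  have ht0 : 0 < t := lt_of_lt_of_le hr2 ht
  have hae : 2 * a * |e| ≤ b0 := by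
    rwa [abs_mul, abs_of_pos (by linarith : (0:ℝ) < 2 * a)] at hc
  have h2 : 2 * a * |e| * |b| ≤ b0 * |b| := mul_le_mul_of_nonneg_right hae (abs_nonneg b)
  have h3 : a * (2 * (|e| * |b|)) ≤ a * (a * t) := by nlinarith
  have h4 : 2 * (|e| * |b|) ≤ a * t := le_of_mul_le_mul_left h3 ha0
  have h5 : -(|b| * |e|) ≤ b * e := by
    calc -(|b| * |e|) = -|b * e| := by rw [abs_mul]
    _ ≤ b * e := neg_abs_le _
  nlinarith [mul_le_mul ha ht hr2.le ha0.le]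

/-- Auxiliary: on the span of the x i, coherence gives μ‖v‖² ≤ ∑ ⟪x i, v⟫². -/
lemma stmt7_span_bound {n d : ℕ} (x : Fin n → EuclideanSpace ℝ (Fin d)) (μ : ℝ) (hμ : 0 < μ)
    (hcoh : ∀ c : Fin n → ℝ, μ * ∑ i, (c i) ^ 2 ≤ ‖∑ i, c i • x i‖ ^ 2)
    (v : EuclideanSpace ℝ (Fin d)) (hv : v ∈ Submodule.span ℝ (Set.range x)) :
    μ * ‖v‖ ^ 2 ≤ ∑ i, ⟪x i, v⟫ ^ 2 := by
  obtain ⟨c, hc⟩ := (Submodule.mem_span_range_iff_exists_fun ℝ).mp hv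
  have hN : ‖v‖ ^ 2 = ∑ i, c i * ⟪x i, v⟫ := by
    rw [← real_inner_self_eq_norm_sq]
    conv_lhs => rw [← hc]
    rw [sum_inner]
    simp only [real_inner_smul_left]
    rw [hc]
  have hCS : (∑ i, c i * ⟪x i, v⟫) ^ 2 ≤ (∑ i, (c i) ^ 2) * ∑ i, ⟪x i, v⟫ ^ 2 :=
    Finset.sum_mul_sq_le_sq_mul_sq _ _ _
  rw [← hN] at hCS
  have hco : μ * ∑ i, (c i) ^ 2 ≤ ‖v‖ ^ 2 := by
    rw [← hc] at *; exact hcoh c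
  have hS : (0:ℝ) ≤ ∑ i, ⟪x i, v⟫ ^ 2 := Finset.sum_nonneg fun i _ => sq_nonneg _
  rcases eq_or_lt_of_le (sq_nonneg ‖v‖) with h0 | h0
  · nlinarith
  · have hC : (0:ℝ) ≤ ∑ i, (c i) ^ 2 := Finset.sum_nonneg fun i _ => sq_nonneg _
    nlinarith [mul_le_mul_of_nonneg_left hCS hμ.le, mul_le_mul_of_nonneg_right hco hS]

/-- Auxiliary: the j-th block of DG(θ) − 2∑ αᵢ Dfᵢ(θ). -/
lemma stmt7_block {n m d : ℕ} (φ : ℝ → ℝ) (x : Fin n → EuclideanSpace ℝ (Fin d))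
    (θ : Param m d) (α : Fin n → ℝ) (j : Fin m) :
    (gradRegG φ x θ - (2:ℝ) • ∑ i, α i • gradF φ x i θ) j
      = ∑ i, (2 * deriv φ ⟪θ j, x i⟫ * (deriv (deriv φ) ⟪θ j, x i⟫ - α i)) • x i := by
  rw [PiLp.sub_apply, PiLp.smul_apply]
  have hs : (∑ i, α i • gradF φ x i θ) j = ∑ i, α i • ((deriv φ ⟪θ j, x i⟫) • x i) := by
    have := map_sum (PiLp.projₗ 2 (fun _ : Fin m => EuclideanSpace ℝ (Fin d)) (𝕜 := ℝ) j)
      (fun i => α i • gradF φ x i θ) Finset.univ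
    simp only [PiLp.projₗ_apply] at this
    rw [show (∑ i, α i • gradF φ x i θ) j = ∑ i, (α i • gradF φ x i θ) j from this]
    rfl
  rw [hs]
  simp only [gradRegG]
  rw [Finset.smul_sum, ← Finset.sum_sub_distrib]
  refine Finset.sum_congr rfl fun i _ => ?_
  rw [smul_smul, smul_smul, ← sub_smul]
  congr 1; ring

/-- strong convexity: at √μ·β-approximate stationary points, the
Hessian quadratic form is ≥ ρ1·ρ2·μ·‖v‖² on vectors whose blocks lie in span{x_i}. -/
theorem stmt_7
    (n m d : ℕ) (hn : 1 ≤ n) (hm : 1 ≤ m) (hd : 1 ≤ d)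
    (x : Fin n → EuclideanSpace ℝ (Fin d)) (hx : ∀ i, ‖x i‖ = 1)
    (μ : ℝ) (hμ : 0 < μ)
    (hcoh : ∀ c : Fin n → ℝ, μ * ∑ i, (c i) ^ 2 ≤ ‖∑ i, c i • x i‖ ^ 2)
    (φ : ℝ → ℝ) (hφ : ContDiff ℝ (⊤ : ℕ∞) φ)
    (ρ1 ρ2 : ℝ) (hρ1 : 0 < ρ1) (hρ2 : 0 < ρ2)
    (hφ' : ∀ z, ρ1 ≤ deriv φ z)
    (hφ''' : ∀ z, ρ2 ≤ deriv (deriv (deriv φ)) z)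
    (β : ℝ) (hβ : 0 < β)
    (hnormal : ∀ z, β * |deriv (deriv φ) z| ≤ (deriv φ z) ^ 2 * deriv (deriv (deriv φ)) z)
    (θ : Param m d) (α : Fin n → ℝ)
    (happrox : ‖gradRegG φ x θ - (2 : ℝ) • ∑ i, α i • gradF φ x i θ‖ ≤ Real.sqrt μ * β) :
    ∀ v : Param m d, (∀ j, v j ∈ Submodule.span ℝ (Set.range x)) →
      ρ1 * ρ2 * μ * ‖v‖ ^ 2
        ≤ ∑ j, ∑ i,
            (2 * deriv φ ⟪θ j, x i⟫ * deriv (deriv (deriv φ)) ⟪θ j, x i⟫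
              + 2 * deriv (deriv φ) ⟪θ j, x i⟫ * (deriv (deriv φ) ⟪θ j, x i⟫ - α i))
            * ⟪x i, v j⟫ ^ 2 := by
  intro v hv
  set w : Param m d := gradRegG φ x θ - (2:ℝ) • ∑ i, α i • gradF φ x i θ with hw
  have hcb : ∀ j i, |2 * deriv φ ⟪θ j, x i⟫ * (deriv (deriv φ) ⟪θ j, x i⟫ - α i)| ≤ β := by
    intro j i
    set c : Fin n → ℝ := fun i => 2 * deriv φ ⟪θ j, x i⟫ * (deriv (deriv φ) ⟪θ j, x i⟫ - α i)
      with hcdef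
    have h1 : ‖∑ i, c i • x i‖ ^ 2 ≤ ‖w‖ ^ 2 := by
      have hwnorm : ‖w‖ ^ 2 = ∑ k, ‖w k‖ ^ 2 := PiLp.norm_sq_eq_of_L2 _ w
      have hwj : w j = ∑ i, c i • x i := by
        rw [hw]; exact stmt7_block φ x θ α j
      rw [hwnorm, ← hwj]
      exact Finset.single_le_sum (f := fun k => ‖w k‖ ^ 2) (fun k _ => sq_nonneg _)
        (Finset.mem_univ j)
    have h2 : ‖w‖ ^ 2 ≤ μ * β ^ 2 := by
      have h := pow_le_pow_left₀ (norm_nonneg w) happrox 2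
      rwa [mul_pow, Real.sq_sqrt hμ.le] at h
    have h3 : μ * ∑ i, c i ^ 2 ≤ μ * β ^ 2 := (hcoh c).trans (h1.trans h2)
    have h4 : ∑ i, c i ^ 2 ≤ β ^ 2 := le_of_mul_le_mul_left h3 hμ
    have h5 : c i ^ 2 ≤ β ^ 2 :=
      (Finset.single_le_sum (f := fun k => c k ^ 2) (fun k _ => sq_nonneg _)
        (Finset.mem_univ i)).trans h4
    have : |c i| ≤ β := abs_le.mpr ⟨by nlinarith, by nlinarith⟩
    simpa [hcdef] using this
  have hkey : ∀ (j : Fin m) (i : Fin n), ρ1 * ρ2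
      ≤ 2 * deriv φ ⟪θ j, x i⟫ * deriv (deriv (deriv φ)) ⟪θ j, x i⟫
        + 2 * deriv (deriv φ) ⟪θ j, x i⟫ * (deriv (deriv φ) ⟪θ j, x i⟫ - α i) := by
    intro j i
    have h := stmt7_key_bound ρ1 ρ2 β (deriv φ ⟪θ j, x i⟫) (deriv (deriv φ) ⟪θ j, x i⟫)
      (deriv (deriv (deriv φ)) ⟪θ j, x i⟫) (deriv (deriv φ) ⟪θ j, x i⟫ - α i)
      hρ1 hρ2 (hφ' _) (hφ''' _) (hcb j i) (hnormal ⟪θ j, x i⟫)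
    linarith
  have hρρ : (0:ℝ) ≤ ρ1 * ρ2 := by positivity
  calc ρ1 * ρ2 * μ * ‖v‖ ^ 2
      = ∑ j, ρ1 * ρ2 * (μ * ‖v j‖ ^ 2) := by
        rw [PiLp.norm_sq_eq_of_L2 (fun _ : Fin m => EuclideanSpace ℝ (Fin d)) v,
          Finset.mul_sum]
        exact Finset.sum_congr rfl fun j _ => by ring
    _ ≤ ∑ j, ρ1 * ρ2 * ∑ i, ⟪x i, v j⟫ ^ 2 := by
        refine Finset.sum_le_sum fun j _ => mul_le_mul_of_nonneg_left ?_ hρρ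
        exact stmt7_span_bound x μ hμ hcoh (v j) (hv j)
    _ = ∑ j, ∑ i, ρ1 * ρ2 * ⟪x i, v j⟫ ^ 2 := by
        exact Finset.sum_congr rfl fun j _ => Finset.mul_sum _ _ _
    _ ≤ _ := by
        refine Finset.sum_le_sum fun j _ => Finset.sum_le_sum fun i _ => ?_
        exact mul_le_mul_of_nonneg_right (hkey j i) (sq_nonneg _)
end
end

section
/- Let k ≥ 1 be an integer, ν > 0, and φ(z) = z^{2k+1} + ν z. Then φ'(z) ≥ ν > 0 and φ'''(z) ≥ 0 for all z ∈ ℝ, and φ satisfies β-normality with β = min{ 1 / ((2k+1)² (2k−1)), ν² }: for all z ∈ ℝ, β · |φ''(z)| ≤ φ'(z)² · φ'''(z). -/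
open Real

noncomputable section

set_option maxHeartbeats 1000000 in
/-- for φ(z) = z^{2k+1} + νz with k ≥ 1 and ν > 0, we have φ' ≥ ν > 0,
φ''' ≥ 0, and φ satisfies β-normality with β = min{1/((2k+1)²(2k−1)), ν²}. -/
theorem stmt_19
    (k : ℕ) (hk : 1 ≤ k) (ν : ℝ) (hν : 0 < ν)
    (φ : ℝ → ℝ) (hφ : φ = fun z => z ^ (2 * k + 1) + ν * z)
    (β : ℝ)
    (hβ : β = min (1 / ((2 * (k : ℝ) + 1) ^ 2 * (2 * (k : ℝ) - 1))) (ν ^ 2)) :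
    (∀ z, ν ≤ deriv φ z) ∧
    (∀ z, 0 ≤ deriv (deriv (deriv φ)) z) ∧
    (∀ z, β * |deriv (deriv φ) z| ≤ (deriv φ z) ^ 2 * deriv (deriv (deriv φ)) z) := by
  obtain ⟨j, rfl⟩ := Nat.exists_eq_add_of_le hk
  set a : ℝ := 2*(j:ℝ)+3 with ha
  set b : ℝ := 2*(j:ℝ)+2 with hb
  set c : ℝ := 2*(j:ℝ)+1 with hc
  have hja : (0:ℝ) ≤ (j:ℝ) := Nat.cast_nonneg j
  have ha0 : 0 < a := by positivity
  have hb0 : 0 < b := by positivity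
  have hc0 : 0 < c := by positivity
  have h1 : deriv φ = fun z => a * z ^ (2*j+2) + ν := by
    rw [hφ]; ext z
    rw [deriv_fun_add (differentiable_pow _).differentiableAt
        ((differentiable_fun_id.const_mul ν).differentiableAt),
      deriv_const_mul _ differentiableAt_fun_id]
    simp [deriv_pow_field]
    rw [show 2*(1+j) = 2*j+2 from by omega, ha]
    push_cast; ring
  have h2 : deriv (deriv φ) = fun z => a * b * z ^ (2*j+1) := by
    rw [h1]; ext z
    rw [deriv_fun_add ((differentiable_pow _).const_mul _).differentiableAt
        (differentiableAt_const ν),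
      deriv_const_mul _ (differentiable_pow _).differentiableAt]
    simp [deriv_pow_field]
    rw [hb]; push_cast; ring
  have h3 : deriv (deriv (deriv φ)) = fun z => a * b * c * z ^ (2*j) := by
    rw [h2]; ext z
    rw [deriv_const_mul _ (differentiable_pow _).differentiableAt]
    simp [deriv_pow_field]
    rw [hc]; push_cast; ring
  have htnn : ∀ z : ℝ, (0:ℝ) ≤ z ^ (2*j) := by
    intro z
    have := sq_nonneg (z ^ j)
    rwa [← pow_mul, show j*2 = 2*j from by ring] at this
  push_cast at hβ
  have hβa : β ≤ 1 / (a^2*c) := by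
    rw [hβ]
    refine le_trans (min_le_left _ _) (le_of_eq ?_)
    rw [ha, hc]; norm_num; ring_nf
  have hβν : β ≤ ν^2 := hβ ▸ min_le_right _ _
  have hβ0 : 0 ≤ β := by
    rw [hβ]
    refine le_min (le_of_lt (div_pos one_pos (by nlinarith))) (by positivity)
  refine ⟨?_, ?_, ?_⟩
  · intro z
    rw [h1]
    simp only
    have h4 : 0 ≤ a * z^(2*j+2) := mul_nonneg ha0.le
      (by rw [pow_add]; exact mul_nonneg (htnn z) (sq_nonneg z))
    linarith
  · intro z
    rw [h3]
    have := htnn z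
    positivity
  · intro z
    rw [h3, h2, h1]
    simp only
    set t : ℝ := z ^ (2*j) with htdef
    have ht : 0 ≤ t := htnn z
    have p1 : z ^ (2*j+1) = t * z := pow_succ z (2*j)
    have p2 : z ^ (2*j+2) = t * z^2 := by rw [pow_add]
    rw [p1, p2]
    have hteq : t = |z|^(2*j) := by
      rw [htdef, ← abs_pow, abs_of_nonneg (htnn z)]
    clear_value a b c t
    clear hφ h1 h2 h3 htnn hβ htdef p1 p2
    have key : β * |z| ≤ c * (a * (t * z^2) + ν)^2 := by
      have hsq : (0:ℝ) ≤ a * (t * z^2) := by positivity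
      rcases le_or_gt |z| 1 with hz | hz
      · have h5 : β * |z| ≤ ν^2 := by
          calc β * |z| ≤ β * 1 := mul_le_mul_of_nonneg_left hz hβ0
            _ = β := mul_one β
            _ ≤ ν^2 := hβν
        nlinarith
      · have hz1 : 1 ≤ |z| := le_of_lt hz
        have ht1 : 1 ≤ t := by
          rw [hteq]; exact one_le_pow₀ hz1
        have hz2 : 1 ≤ z^2 := by rw [← sq_abs]; exact one_le_pow₀ hz1
        have hz3 : |z| ≤ z^2 := by
          rw [← sq_abs]
          exact le_self_pow₀ hz1 two_ne_zero
        have hz4 : |z| ≤ z^2*z^2 := by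
          have := mul_le_mul_of_nonneg_right hz2 (sq_nonneg z)
          nlinarith
        have hM : a^2 * (z^2*z^2) ≤ (a*(t*z^2)+ν)^2 := by
          nlinarith [mul_nonneg (mul_nonneg (sub_nonneg.mpr ht1)
              (by positivity : (0:ℝ) ≤ t+1)) (by positivity : (0:ℝ) ≤ a^2*(z^2*z^2)),
            mul_nonneg (mul_nonneg (mul_nonneg ha0.le ht) (sq_nonneg z)) hν.le,
            sq_nonneg ν]
        have ha3 : 3 ≤ a := by rw [ha]; linarith
        have hc1 : 1 ≤ c := by rw [hc]; linarith
        have h8 : 1 ≤ a^2*c := by nlinarith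
        have h7 : 1/(a^2*c) ≤ c*a^2 := by
          rw [div_le_iff₀ (by positivity)]
          nlinarith [sq_nonneg (a^2*c-1)]
        calc β * |z| ≤ β * (z^2*z^2) := mul_le_mul_of_nonneg_left hz4 hβ0
          _ ≤ (1/(a^2*c))*(z^2*z^2) := mul_le_mul_of_nonneg_right hβa (by positivity)
          _ ≤ (c*a^2)*(z^2*z^2) := mul_le_mul_of_nonneg_right h7 (by positivity)
          _ = c*(a^2*(z^2*z^2)) := by ring
          _ ≤ c*(a*(t*z^2)+ν)^2 := mul_le_mul_of_nonneg_left hM hc0.le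
    have hab : (0:ℝ) ≤ a * b := by positivity
    have habs : |a * b * (t * z)| = a * b * (t * |z|) := by
      rw [abs_mul, abs_of_nonneg hab, abs_mul, abs_of_nonneg ht]
    rw [habs]
    calc β * (a*b*(t*|z|)) = (β*|z|)*(a*b*t) := by ring
      _ ≤ (c*(a*(t*z^2)+ν)^2)*(a*b*t) := mul_le_mul_of_nonneg_right key (by positivity)
      _ = (a*(t*z^2)+ν)^2*(a*b*c*t) := by ring
end
end
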